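/- Let F be a distribution on ℝ and τ a counting random variable with P(τ = k) = pₖ, ∑_{k=0}^n pₖ = 1 and pₙ > 0 for some n ≥ 1. Then the compound distribution F^{*τ} = ∑_{k=0}^n pₖ F^{*k} is long-tailed if and only if F^{*n} is long-tailed. -/

import Mathlib

open MeasureTheory Filter Set Asymptotics

/-- Tail function of a distribution: `F̄(x) = μ(x, ∞)`. -/
noncomputable def tail (μ : Measure ℝ) (x : ℝ) : ℝ := (μ (Set.Ioi x)).toReal

/-- `F(a, b] = F(b) - F(a)`. -/
noncomputable def intv (μ : Measure ℝ) (a b : ℝ) : ℝ := (μ (Set.Ioc a b)).toReal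

/-- A distribution is long-tailed if `F̄(x+1)/F̄(x) → 1` as `x → ∞`. -/
def LongTailed (μ : Measure ℝ) : Prop :=
  Tendsto (fun x => tail μ (x + 1) / tail μ x) atTop (nhds 1)

/-- Convolution of two distributions on ℝ (law of the sum of independent rvs). -/
noncomputable def mconv (μ ν : Measure ℝ) : Measure ℝ :=
  Measure.map (fun p : ℝ × ℝ => p.1 + p.2) (μ.prod ν)

/-- `n`-fold convolution of a distribution with itself; `nconv μ 0` is the unit mass at 0. -/
noncomputable def nconv (μ : Measure ℝ) : ℕ → Measure ℝ
  | 0 => Measure.dirac 0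
  | n + 1 => mconv (nconv μ n) μ


lemma mconv_eq (μ ν : Measure ℝ) : mconv μ ν = μ.conv ν := rfl

lemma hadd_meas : Measurable (fun p : ℝ × ℝ => p.1 + p.2) :=
  measurable_fst.add measurable_snd

lemma mconv_assoc (μ ν ρ : Measure ℝ) [SFinite μ] [SFinite ν] [SFinite ρ] :
    mconv (mconv μ ν) ρ = mconv μ (mconv ν ρ) := by
  unfold mconv
  have h1 : (Measure.map (fun p : ℝ × ℝ => p.1 + p.2) (μ.prod ν)).prod ρ
      = Measure.map (Prod.map (fun p : ℝ × ℝ => p.1 + p.2) id) ((μ.prod ν).prod ρ) := by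
    conv_lhs => rw [← Measure.map_id (μ := ρ)]
    exact Measure.map_prod_map _ _ hadd_meas measurable_id
  have h2 : μ.prod (Measure.map (fun p : ℝ × ℝ => p.1 + p.2) (ν.prod ρ))
      = Measure.map (Prod.map id (fun p : ℝ × ℝ => p.1 + p.2)) (μ.prod (ν.prod ρ)) := by
    conv_lhs => rw [← Measure.map_id (μ := μ)]
    exact Measure.map_prod_map _ _ measurable_id hadd_meas
  rw [h1, h2, ← Measure.prodAssoc_prod (μ := μ) (ν := ν) (τ := ρ),
    Measure.map_map hadd_meas (hadd_meas.prodMap measurable_id),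
    Measure.map_map (measurable_id.prodMap hadd_meas) MeasurableEquiv.prodAssoc.measurable,
    Measure.map_map hadd_meas ((measurable_id.prodMap hadd_meas).comp MeasurableEquiv.prodAssoc.measurable)]
  congr 1
  ext q
  simp [MeasurableEquiv.prodAssoc, Prod.map, add_assoc]

instance nconv_prob (F : Measure ℝ) [IsProbabilityMeasure F] (k : ℕ) :
    IsProbabilityMeasure (nconv F k) := by
  induction k with
  | zero => exact Measure.dirac.isProbabilityMeasure
  | succ k ih => rw [nconv, mconv_eq]; infer_instance

lemma nconv_add (F : Measure ℝ) [IsProbabilityMeasure F] (k m : ℕ) :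
    nconv F (k + m) = mconv (nconv F k) (nconv F m) := by
  induction m with
  | zero => rw [Nat.add_zero]; show _ = mconv _ (Measure.dirac 0); rw [mconv_eq]; simp
  | succ m ih =>
    show mconv (nconv F (k + m)) F = mconv (nconv F k) (mconv (nconv F m) F)
    rw [ih, mconv_assoc]

/-- key lower bounds for convolution -/
lemma mconv_Ioi_bound (μ ν : Measure ℝ) [SFinite μ] [SFinite ν] (a x : ℝ) :
    ν (Set.Ioc (-a) a) * μ (Set.Ioi x) ≤ (mconv μ ν) (Set.Ioi (x - a)) := by
  rw [mconv, Measure.map_apply hadd_meas measurableSet_Ioi,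
    Measure.prod_apply (hadd_meas measurableSet_Ioi)]
  calc ν (Set.Ioc (-a) a) * μ (Set.Ioi x)
      = ∫⁻ _ in Set.Ioi x, ν (Set.Ioc (-a) a) ∂μ := by
        rw [MeasureTheory.setLIntegral_const, mul_comm]
    _ ≤ ∫⁻ u in Set.Ioi x, ν (Prod.mk u ⁻¹' ((fun p : ℝ × ℝ => p.1 + p.2) ⁻¹' Set.Ioi (x - a))) ∂μ := by
        refine setLIntegral_mono (measurable_measure_prodMk_left (hadd_meas measurableSet_Ioi)) ?_
        intro u hu
        refine measure_mono fun v hv => ?_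
        simp only [Set.mem_preimage, Set.mem_Ioi]
        have h1 : x < u := hu
        have h2 : -a < v := hv.1
        linarith
    _ ≤ ∫⁻ u, ν (Prod.mk u ⁻¹' ((fun p : ℝ × ℝ => p.1 + p.2) ⁻¹' Set.Ioi (x - a))) ∂μ :=
        setLIntegral_le_lintegral _ _

lemma mconv_Ioc_bound (μ ν : Measure ℝ) [SFinite μ] [SFinite ν] (a x b : ℝ) :
    ν (Set.Ioc (-a) a) * μ (Set.Ioc x b) ≤ (mconv μ ν) (Set.Ioc (x - a) (b + a)) := by
  rw [mconv, Measure.map_apply hadd_meas measurableSet_Ioc,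
    Measure.prod_apply (hadd_meas measurableSet_Ioc)]
  calc ν (Set.Ioc (-a) a) * μ (Set.Ioc x b)
      = ∫⁻ _ in Set.Ioc x b, ν (Set.Ioc (-a) a) ∂μ := by
        rw [MeasureTheory.setLIntegral_const, mul_comm]
    _ ≤ ∫⁻ u in Set.Ioc x b, ν (Prod.mk u ⁻¹' ((fun p : ℝ × ℝ => p.1 + p.2) ⁻¹' Set.Ioc (x - a) (b + a))) ∂μ := by
        refine setLIntegral_mono (measurable_measure_prodMk_left (hadd_meas measurableSet_Ioc)) ?_
        intro u hu
        refine measure_mono fun v hv => ?_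
        simp only [Set.mem_preimage, Set.mem_Ioc]
        obtain ⟨h1, h2⟩ := hu
        obtain ⟨h3, h4⟩ := hv
        constructor <;> linarith
    _ ≤ ∫⁻ u, ν (Prod.mk u ⁻¹' ((fun p : ℝ × ℝ => p.1 + p.2) ⁻¹' Set.Ioc (x - a) (b + a))) ∂μ :=
        setLIntegral_le_lintegral _ _
lemma tail_nonneg (μ : Measure ℝ) (x : ℝ) : 0 ≤ tail μ x := ENNReal.toReal_nonneg

lemma tail_anti (μ : Measure ℝ) [IsFiniteMeasure μ] : Antitone (tail μ) := by
  intro a b hab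
  exact ENNReal.toReal_mono (measure_ne_top μ _) (measure_mono (Set.Ioi_subset_Ioi hab))

lemma tail_sub (μ : Measure ℝ) [IsFiniteMeasure μ] {a b : ℝ} (h : a ≤ b) :
    tail μ a - tail μ b = intv μ a b := by
  have hsplit : Set.Ioi a = Set.Ioc a b ∪ Set.Ioi b := (Set.Ioc_union_Ioi_eq_Ioi h).symm
  have hdisj : Disjoint (Set.Ioc a b) (Set.Ioi b) := fun s hs hs' u hu =>
    absurd ((hs' hu).trans_le (hs hu).2) (lt_irrefl _)
  unfold tail intv
  rw [hsplit, measure_union hdisj measurableSet_Ioi,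
    ENNReal.toReal_add (measure_ne_top μ _) (measure_ne_top μ _)]
  ring

/-- every probability measure on ℝ puts positive mass on some symmetric interval -/
lemma exists_Ioc_pos (ν : Measure ℝ) [IsProbabilityMeasure ν] :
    ∃ a : ℝ, 0 ≤ a ∧ 0 < (ν (Set.Ioc (-a) a)).toReal := by
  have hU : (⋃ n : ℕ, Set.Ioc (-(n:ℝ)) n) = Set.univ := by
    ext x
    simp only [Set.mem_iUnion, Set.mem_univ, iff_true, Set.mem_Ioc]
    obtain ⟨n, hn⟩ := exists_nat_gt |x| 
    exact ⟨n, by cases abs_lt.1 hn with | intro h1 h2 => exact ⟨h1, h2.le⟩⟩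
  have hmono : Monotone (fun n : ℕ => Set.Ioc (-(n:ℝ)) n) := by
    intro i j hij
    apply Set.Ioc_subset_Ioc <;> simp [Nat.cast_le.2 hij, neg_le_neg]
  have h1 : ν (⋃ n : ℕ, Set.Ioc (-(n:ℝ)) n) = ⨆ n : ℕ, ν (Set.Ioc (-(n:ℝ)) (n:ℝ)) :=
    hmono.directed_le.measure_iUnion
  rw [hU, measure_univ] at h1
  have h2 : (0 : ENNReal) < ⨆ n : ℕ, ν (Set.Ioc (-(n:ℝ)) (n:ℝ)) := h1 ▸ zero_lt_one
  obtain ⟨n, hn⟩ := lt_iSup_iff.mp h2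
  exact ⟨n, Nat.cast_nonneg n, ENNReal.toReal_pos hn.ne' (measure_ne_top ν _)⟩

/-- long-tailedness forces positive tail everywhere -/
lemma longTailed_pos (μ : Measure ℝ) [IsFiniteMeasure μ] (h : LongTailed μ) (x : ℝ) :
    0 < tail μ x := by
  have hev : ∀ᶠ y in atTop, (1:ℝ)/2 < tail μ (y + 1) / tail μ y :=
    h.eventually (eventually_gt_nhds (by norm_num))
  obtain ⟨y, hy, hyx⟩ := (hev.and (eventually_ge_atTop x)).exists
  have hty : tail μ y ≠ 0 := by
    intro h0
    rw [h0, div_zero] at hy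
    linarith
  have : 0 < tail μ y := lt_of_le_of_ne (tail_nonneg μ y) (Ne.symm hty)
  exact lt_of_lt_of_le this (tail_anti μ hyx)

/-- shift lemma: long tailedness gives all constant shifts -/
lemma tendsto_shift (t : ℝ → ℝ) (hanti : Antitone t) (hpos : ∀ x, 0 < t x)
    (h : Tendsto (fun x => t (x + 1) / t x) atTop (nhds 1)) (c : ℝ) :
    Tendsto (fun x => t (x + c) / t x) atTop (nhds 1) := by
  have hnat : ∀ m : ℕ, Tendsto (fun x => t (x + m) / t x) atTop (nhds 1) := by
    intro m
    induction m with
    | zero =>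
      have : (fun x => t (x + (0:ℕ)) / t x) = fun _ => 1 := by
        funext x; simp [div_self (hpos x).ne']
      rw [this]; exact tendsto_const_nhds
    | succ m ih =>
      have h1 : Tendsto (fun x => t (x + 1 + m) / t (x + 1)) atTop (nhds 1) :=
        ih.comp (tendsto_atTop_add_const_right atTop 1 tendsto_id)
      have h2 := h1.mul h
      rw [one_mul] at h2
      refine h2.congr fun x => ?_
      have hne : t (x + 1) ≠ 0 := (hpos _).ne'
      field_simp
      push_cast
      ring_nf
  rcases le_or_gt 0 c with hc | hc
  · -- squeeze between t(x+m)/t x and 1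
    set m : ℕ := ⌈c⌉₊ with hm
    have hcm : c ≤ m := Nat.le_ceil c
    refine tendsto_of_tendsto_of_tendsto_of_le_of_le (hnat m) tendsto_const_nhds ?_ ?_
    · intro x
      exact (div_le_div_iff_of_pos_right (hpos x)).mpr (hanti (by linarith))
    · intro x
      rw [div_le_one (hpos x)]
      exact hanti (by linarith)
  · -- negative shift: inverse of positive shift along translated filter
    have h1 : Tendsto (fun y => t (y + (-c)) / t y) atTop (nhds 1) := by
      have := hnat ⌈(-c)⌉₊
      -- reuse nonneg case: prove directly
      refine tendsto_of_tendsto_of_tendsto_of_le_of_le (hnat ⌈(-c)⌉₊) tendsto_const_nhds ?_ ?_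
      · intro x
        exact (div_le_div_iff_of_pos_right (hpos x)).mpr (hanti (by have := Nat.le_ceil (-c); linarith))
      · intro x
        rw [div_le_one (hpos x)]
        exact hanti (by linarith)
    have h2 : Tendsto (fun x => t ((x + c) + (-c)) / t (x + c)) atTop (nhds 1) :=
      h1.comp (tendsto_atTop_add_const_right atTop c tendsto_id)
    have h3 := h2.inv₀ one_ne_zero
    rw [inv_one] at h3
    refine h3.congr fun x => ?_
    have : (x + c) + (-c) = x := by ring
    rw [this, inv_div]

lemma intv_nonneg (μ : Measure ℝ) (a b : ℝ) : 0 ≤ intv μ a b := ENNReal.toReal_nonneg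

lemma intv_mono (μ : Measure ℝ) [IsFiniteMeasure μ] {a a' b b' : ℝ} (ha : a' ≤ a) (hb : b ≤ b') :
    intv μ a b ≤ intv μ a' b' :=
  ENNReal.toReal_mono (measure_ne_top μ _) (measure_mono (Set.Ioc_subset_Ioc ha hb))

lemma nconv_dom (F : Measure ℝ) [IsProbabilityMeasure F] {k n : ℕ} (hkn : k ≤ n) :
    ∃ a c : ℝ, 0 ≤ a ∧ 0 < c ∧
      (∀ x, c * tail (nconv F k) x ≤ tail (nconv F n) (x - a)) ∧
      (∀ x b, c * intv (nconv F k) x b ≤ intv (nconv F n) (x - a) (b + a)) := by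
  obtain ⟨m, rfl⟩ : ∃ m, n = k + m := ⟨n - k, (Nat.add_sub_cancel' hkn).symm⟩
  set ν := nconv F m with hν
  obtain ⟨a, ha0, hc⟩ := exists_Ioc_pos ν
  have e := nconv_add F k m
  haveI : IsFiniteMeasure (mconv (nconv F k) (nconv F m)) := by
    rw [← e]; infer_instance
  refine ⟨a, (ν (Set.Ioc (-a) a)).toReal, ha0, hc, fun x => ?_, fun x b => ?_⟩
  · rw [e]
    unfold tail
    rw [← ENNReal.toReal_mul]
    exact ENNReal.toReal_mono (measure_ne_top _ _) (mconv_Ioi_bound (nconv F k) ν a x)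
  · rw [e]
    unfold intv
    rw [← ENNReal.toReal_mul]
    exact ENNReal.toReal_mono (measure_ne_top _ _) (mconv_Ioc_bound (nconv F k) ν a x b)

lemma nconv_dom_unif (F : Measure ℝ) [IsProbabilityMeasure F] (n : ℕ) :
    ∃ a c : ℝ, 0 ≤ a ∧ 0 < c ∧ ∀ k, k ≤ n →
      (∀ x, c * tail (nconv F k) x ≤ tail (nconv F n) (x - a)) ∧
      (∀ x b, c * intv (nconv F k) x b ≤ intv (nconv F n) (x - a) (b + a)) := by
  choose! a c ha hc ht hi using fun k (hk : k ≤ n) => nconv_dom F hk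
  set s : Finset ℕ := Finset.range (n + 1) with hs
  have hsne : s.Nonempty := ⟨0, Finset.mem_range.mpr (Nat.succ_pos n)⟩
  have hmem : ∀ k, k ≤ n → k ∈ s := fun k hk => Finset.mem_range.mpr (Nat.lt_succ_of_le hk)
  refine ⟨s.sup' hsne a, s.inf' hsne c, ?_, ?_, ?_⟩
  · exact le_trans (ha 0 (Nat.zero_le n)) (Finset.le_sup' a (hmem 0 (Nat.zero_le n)))
  · exact (Finset.lt_inf'_iff hsne).mpr fun k hk => hc k (Nat.lt_succ_iff.mp (Finset.mem_range.mp hk))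
  · intro k hk
    have hck : s.inf' hsne c ≤ c k := Finset.inf'_le c (hmem k hk)
    have hak : a k ≤ s.sup' hsne a := Finset.le_sup' a (hmem k hk)
    constructor
    · intro x
      calc s.inf' hsne c * tail (nconv F k) x ≤ c k * tail (nconv F k) x :=
            mul_le_mul_of_nonneg_right hck (tail_nonneg _ _)
        _ ≤ tail (nconv F n) (x - a k) := ht k hk x
        _ ≤ tail (nconv F n) (x - s.sup' hsne a) := tail_anti _ (by linarith)
    · intro x b
      calc s.inf' hsne c * intv (nconv F k) x b ≤ c k * intv (nconv F k) x b :=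
            mul_le_mul_of_nonneg_right hck (intv_nonneg _ _ _)
        _ ≤ intv (nconv F n) (x - a k) (b + a k) := hi k hk x b
        _ ≤ intv (nconv F n) (x - s.sup' hsne a) (b + s.sup' hsne a) :=
            intv_mono _ (by linarith) (by linarith)

/-- For i.i.d. summands and a counting variable with bounded support, the compound
distribution sum_k p_k F^{*k} is long-tailed iff F^{*n} is long-tailed. -/
theorem stmt11 (F : Measure ℝ) [IsProbabilityMeasure F] (x₀ : ℝ) (hx₀ : 0 < tail F x₀)
    (n : ℕ) (hn : 1 ≤ n) (p : ℕ → ℝ) (hp0 : ∀ k, 0 ≤ p k)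
    (hsum : ∑ k ∈ Finset.range (n + 1), p k = 1) (hpn : 0 < p n) :
    LongTailed (∑ k ∈ Finset.range (n + 1), ENNReal.ofReal (p k) • nconv F k) ↔
      LongTailed (nconv F n) := by
  set G : Measure ℝ := ∑ k ∈ Finset.range (n + 1), ENNReal.ofReal (p k) • nconv F k with hG
  set s : Finset ℕ := Finset.range (n + 1) with hs
  have hnmem : n ∈ s := Finset.mem_range.mpr (Nat.lt_succ_self n)
  -- the tail/interval formulas for G
  have hGapp : ∀ u : Set ℝ, (G u).toReal = ∑ k ∈ s, p k * ((nconv F k) u).toReal := by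
    intro u
    rw [hG, Measure.finset_sum_apply,
      ENNReal.toReal_sum (s := s) (f := fun k => (ENNReal.ofReal (p k) • nconv F k) u)
        (fun k _ => by
          show (ENNReal.ofReal (p k) • nconv F k) u ≠ ⊤
          rw [Measure.smul_apply, smul_eq_mul]
          exact ENNReal.mul_ne_top ENNReal.ofReal_ne_top (measure_ne_top _ _))]
    refine Finset.sum_congr rfl fun k _ => ?_
    rw [Measure.smul_apply, smul_eq_mul, ENNReal.toReal_mul, ENNReal.toReal_ofReal (hp0 k)]
  haveI hGfin : IsFiniteMeasure G := by
    constructor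
    rw [hG, Measure.finset_sum_apply]
    refine ENNReal.sum_lt_top.mpr fun k _ => ?_
    rw [Measure.smul_apply, smul_eq_mul]
    exact ENNReal.mul_lt_top ENNReal.ofReal_lt_top (measure_lt_top _ _)
  have hTG : ∀ x, tail G x = ∑ k ∈ s, p k * tail (nconv F k) x := fun x => hGapp _
  have hIG : ∀ x b, intv G x b = ∑ k ∈ s, p k * intv (nconv F k) x b := fun x b => hGapp _
  obtain ⟨A, C, hA0, hC, hdom⟩ := nconv_dom_unif F n
  -- bound: C * tail G x ≤ tail (nconv F n) (x - A)
  have hGub : ∀ x, C * tail G x ≤ tail (nconv F n) (x - A) := by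
    intro x
    rw [hTG, Finset.mul_sum]
    calc ∑ k ∈ s, C * (p k * tail (nconv F k) x)
        ≤ ∑ k ∈ s, p k * tail (nconv F n) (x - A) := by
          refine Finset.sum_le_sum fun k hk => ?_
          have hb := (hdom k (Nat.lt_succ_iff.mp (Finset.mem_range.mp hk))).1 x
          calc C * (p k * tail (nconv F k) x) = p k * (C * tail (nconv F k) x) := by ring
            _ ≤ p k * tail (nconv F n) (x - A) := mul_le_mul_of_nonneg_left hb (hp0 k)
      _ = tail (nconv F n) (x - A) := by rw [← Finset.sum_mul, hsum, one_mul]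
  have hGIub : ∀ x b, C * intv G x b ≤ intv (nconv F n) (x - A) (b + A) := by
    intro x b
    rw [hIG, Finset.mul_sum]
    calc ∑ k ∈ s, C * (p k * intv (nconv F k) x b)
        ≤ ∑ k ∈ s, p k * intv (nconv F n) (x - A) (b + A) := by
          refine Finset.sum_le_sum fun k hk => ?_
          have hb := (hdom k (Nat.lt_succ_iff.mp (Finset.mem_range.mp hk))).2 x b
          calc C * (p k * intv (nconv F k) x b) = p k * (C * intv (nconv F k) x b) := by ring
            _ ≤ p k * intv (nconv F n) (x - A) (b + A) := mul_le_mul_of_nonneg_left hb (hp0 k)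
      _ = intv (nconv F n) (x - A) (b + A) := by rw [← Finset.sum_mul, hsum, one_mul]
  -- lower bounds by the n-th term
  have hGlb : ∀ x, p n * tail (nconv F n) x ≤ tail G x := by
    intro x
    rw [hTG]
    exact Finset.single_le_sum (f := fun k => p k * tail (nconv F k) x)
      (fun k _ => mul_nonneg (hp0 k) (tail_nonneg _ _)) hnmem
  have hGIlb : ∀ x b, p n * intv (nconv F n) x b ≤ intv G x b := by
    intro x b
    rw [hIG]
    exact Finset.single_le_sum (f := fun k => p k * intv (nconv F k) x b)
      (fun k _ => mul_nonneg (hp0 k) (intv_nonneg _ _ _)) hnmem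
  constructor
  · -- G long-tailed → F^{*n} long-tailed
    intro h
    have hTp : ∀ x, 0 < tail G x := longTailed_pos G h
    have htn_pos : ∀ x, 0 < tail (nconv F n) x := by
      intro x
      have h1 := hGub (x + A)
      rw [add_sub_cancel_right] at h1
      exact lt_of_lt_of_le (mul_pos hC (hTp (x + A))) h1
    -- shift for G
    have hshiftG := tendsto_shift (tail G) (tail_anti G) hTp h A
    have hratio : Tendsto (fun x => tail G x / tail G (x + A)) atTop (nhds 1) := by
      have := hshiftG.inv₀ one_ne_zero
      rw [inv_one] at this
      refine this.congr fun x => ?_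
      rw [inv_div]
    -- d x := 1 - ratio at n
    have hB : Tendsto (fun x => (1 / (p n * C)) *
        ((1 - tail G (x + 1) / tail G x) * (tail G x / tail G (x + A)))) atTop (nhds 0) := by
      have h1 : Tendsto (fun x => 1 - tail G (x + 1) / tail G x) atTop (nhds (1 - 1)) :=
        tendsto_const_nhds.sub h
      rw [sub_self] at h1
      have h2 := (h1.mul hratio).const_mul (1 / (p n * C))
      rw [zero_mul, mul_zero] at h2
      exact h2
    have hd : Tendsto (fun x => 1 - tail (nconv F n) (x + 1) / tail (nconv F n) x) atTop (nhds 0) := by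
      refine squeeze_zero (fun x => ?_) (fun x => ?_) hB
      · rw [sub_nonneg, div_le_one (htn_pos x)]
        exact tail_anti _ (by linarith)
      · have hnum : tail (nconv F n) x - tail (nconv F n) (x + 1)
            ≤ (tail G x - tail G (x + 1)) / p n := by
          rw [le_div_iff₀ hpn, mul_comm]
          calc p n * (tail (nconv F n) x - tail (nconv F n) (x + 1))
              = p n * intv (nconv F n) x (x + 1) := by rw [tail_sub _ (by linarith)]
            _ ≤ intv G x (x + 1) := hGIlb x (x + 1)
            _ = tail G x - tail G (x + 1) := (tail_sub _ (by linarith)).symm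
        have hden : C * tail G (x + A) ≤ tail (nconv F n) x := by
          have h1 := hGub (x + A); rwa [add_sub_cancel_right] at h1
        have hden_pos : 0 < C * tail G (x + A) := mul_pos hC (hTp _)
        have hstep : 1 - tail (nconv F n) (x + 1) / tail (nconv F n) x
            = (tail (nconv F n) x - tail (nconv F n) (x + 1)) / tail (nconv F n) x := by
          rw [sub_div, div_self (htn_pos x).ne']
        rw [hstep]
        have hmain : (tail (nconv F n) x - tail (nconv F n) (x + 1)) / tail (nconv F n) x
            ≤ ((tail G x - tail G (x + 1)) / p n) / (C * tail G (x + A)) := by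
          refine div_le_div₀ (div_nonneg (by rw [sub_nonneg]; exact tail_anti _ (by linarith)) hpn.le) hnum hden_pos hden
        refine hmain.trans (le_of_eq ?_)
        have hpn' : p n ≠ 0 := hpn.ne'
        have hC' : C ≠ 0 := hC.ne'
        have hTx : tail G x ≠ 0 := (hTp x).ne'
        have hTxA : tail G (x + A) ≠ 0 := (hTp _).ne'
        field_simp
    have hfin : Tendsto (fun x => 1 - (1 - tail (nconv F n) (x + 1) / tail (nconv F n) x))
        atTop (nhds (1 - 0)) := tendsto_const_nhds.sub hd
    rw [sub_zero] at hfin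
    exact hfin.congr fun x => by ring
  · -- F^{*n} long-tailed → G long-tailed
    intro h
    have htn_pos : ∀ x, 0 < tail (nconv F n) x := longTailed_pos _ h
    have hTp : ∀ x, 0 < tail G x := fun x =>
      lt_of_lt_of_le (mul_pos hpn (htn_pos x)) (hGlb x)
    have hsh1 := tendsto_shift (tail (nconv F n)) (tail_anti _) htn_pos h (-A)
    have hsh2 := tendsto_shift (tail (nconv F n)) (tail_anti _) htn_pos h (1 + A)
    have hB : Tendsto (fun x => (1 / (C * p n)) *
        (tail (nconv F n) (x + -A) / tail (nconv F n) x
          - tail (nconv F n) (x + (1 + A)) / tail (nconv F n) x)) atTop (nhds 0) := by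
      have h1 := (hsh1.sub hsh2).const_mul (1 / (C * p n))
      rw [sub_self, mul_zero] at h1
      exact h1
    have hd : Tendsto (fun x => 1 - tail G (x + 1) / tail G x) atTop (nhds 0) := by
      refine squeeze_zero (fun x => ?_) (fun x => ?_) hB
      · rw [sub_nonneg, div_le_one (hTp x)]
        exact tail_anti _ (by linarith)
      · have hnum : tail G x - tail G (x + 1)
            ≤ (tail (nconv F n) (x + -A) - tail (nconv F n) (x + (1 + A))) / C := by
          rw [le_div_iff₀ hC, mul_comm]
          calc C * (tail G x - tail G (x + 1)) = C * intv G x (x + 1) := by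
                rw [tail_sub _ (by linarith)]
            _ ≤ intv (nconv F n) (x - A) (x + 1 + A) := hGIub x (x + 1)
            _ = tail (nconv F n) (x - A) - tail (nconv F n) (x + 1 + A) :=
                (tail_sub _ (by linarith)).symm
            _ = tail (nconv F n) (x + -A) - tail (nconv F n) (x + (1 + A)) := by ring_nf
        have hden : p n * tail (nconv F n) x ≤ tail G x := hGlb x
        have hden_pos : 0 < p n * tail (nconv F n) x := mul_pos hpn (htn_pos x)
        have hstep : 1 - tail G (x + 1) / tail G x
            = (tail G x - tail G (x + 1)) / tail G x := by
          rw [sub_div, div_self (hTp x).ne']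
        rw [hstep]
        have hmain : (tail G x - tail G (x + 1)) / tail G x
            ≤ ((tail (nconv F n) (x + -A) - tail (nconv F n) (x + (1 + A))) / C)
              / (p n * tail (nconv F n) x) := by
          refine div_le_div₀ ?_ hnum hden_pos hden
          have h0 : 0 ≤ tail G x - tail G (x + 1) := by
            rw [sub_nonneg]; exact tail_anti _ (by linarith)
          exact le_trans h0 hnum
        refine hmain.trans (le_of_eq ?_)
        have hpn' : p n ≠ 0 := hpn.ne'
        have hC' : C ≠ 0 := hC.ne'
        have htx : tail (nconv F n) x ≠ 0 := (htn_pos x).ne'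
        field_simp
    have hfin : Tendsto (fun x => 1 - (1 - tail G (x + 1) / tail G x))
        atTop (nhds (1 - 0)) := tendsto_const_nhds.sub hd
    rw [sub_zero] at hfin
    exact hfin.congr fun x => by ring
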